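/- The operator ∇̃_n raises the Krawtchouk index: for every r ∈ {0,...,n}, ∇̃_n φ_r = (1/(nt))·φ_{r+1}, with the convention φ_{n+1} = 0. -/

import Mathlib

open Finset Polynomial

private lemma aux_alg (n k r : ℕ) (t p1 p2 p3 q c1 c2 c3 c4 : ℝ)
    (ht0 : t ≠ 0) (ht1 : (1:ℝ) - t ≠ 0) (hn : (n:ℝ) ≠ 0)
    (e1 : (k:ℝ) * p1 = (k:ℝ) * (c1 * (Nat.factorial r : ℝ) / (1-t)^r))
    (e2 : p2 = c2 * (Nat.factorial r : ℝ) / (1-t)^r)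
    (e3 : ((n:ℝ)-(k:ℝ)) * p3 = ((n:ℝ)-(k:ℝ)) * (c3 * (Nat.factorial r : ℝ) / (1-t)^r))
    (e4 : q = c4 * ((r:ℝ)+1) * (Nat.factorial r : ℝ) / (1-t)^(r+1))
    (K : (k:ℝ)*(1-t)^2*c1 - ((n:ℝ)-2*(k:ℝ))*(t*(1-t))*c2 - ((n:ℝ)-(k:ℝ))*t^2*c3
        = c4 * ((r:ℝ)+1)) :
    (k : ℝ) / n * ((1 - t) / t) * p1 - ((n : ℝ) - 2 * k) / n * p2
        - ((n : ℝ) - k) / n * (t / (1 - t)) * p3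
      = 1 / ((n : ℝ) * t) * q := by
  have hp : ((1:ℝ)-t)^r ≠ 0 := pow_ne_zero _ ht1
  have expand : (k : ℝ) / n * ((1 - t) / t) * p1 - ((n : ℝ) - 2 * k) / n * p2
        - ((n : ℝ) - k) / n * (t / (1 - t)) * p3
      = 1/(n:ℝ) * ((1-t)/t) * ((k:ℝ)*p1) - ((n:ℝ)-2*(k:ℝ))/n * p2
        - 1/(n:ℝ) * (t/(1-t)) * (((n:ℝ)-(k:ℝ))*p3) := by ring
  rw [expand, e1, e2, e3, e4]
  have step : 1/(n:ℝ) * ((1-t)/t) * ((k:ℝ) * (c1 * (Nat.factorial r : ℝ) / (1-t)^r))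
        - ((n:ℝ)-2*(k:ℝ))/n * (c2 * (Nat.factorial r : ℝ) / (1-t)^r)
        - 1/(n:ℝ) * (t/(1-t)) * (((n:ℝ)-(k:ℝ)) * (c3 * (Nat.factorial r : ℝ) / (1-t)^r))
      = (Nat.factorial r : ℝ) / ((n:ℝ) * t * (1-t) * (1-t)^r) *
        ((k:ℝ)*(1-t)^2*c1 - ((n:ℝ)-2*(k:ℝ))*(t*(1-t))*c2 - ((n:ℝ)-(k:ℝ))*t^2*c3) := by
    field_simp
  rw [step, K, pow_succ]
  field_simp

private lemma key_mid (a b : ℕ) (t : ℝ) :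
    C (((a:ℝ)+1)*(1-t)^2) * ((1 + C (1-t) * X)^a * (1 - C t * X)^(b+2))
      - C (((b:ℝ)-(a:ℝ))*(t*(1-t))) * ((1 + C (1-t) * X)^(a+1) * (1 - C t * X)^(b+1))
      - C (((b:ℝ)+1)*t^2) * ((1 + C (1-t) * X)^(a+2) * (1 - C t * X)^b)
      = derivative ((1 + C (1-t) * X)^(a+1) * (1 - C t * X)^(b+1)) := by
  have hd : derivative ((1 + C (1-t) * X)^(a+1) * (1 - C t * X)^(b+1) : ℝ[X])
      = C (((a:ℝ)+1)*(1-t)) * ((1 + C (1-t) * X)^a * (1 - C t * X)^(b+1))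
        - C (((b:ℝ)+1)*t) * ((1 + C (1-t) * X)^(a+1) * (1 - C t * X)^b) := by
    simp [derivative_mul, derivative_pow]
    ring
  rw [hd]
  apply Polynomial.funext
  intro x
  simp only [eval_mul, eval_pow, eval_C, eval_X, eval_add, eval_sub, eval_one]
  ring

private lemma key_zero (b : ℕ) (t : ℝ) :
    - C (((b:ℝ)+1)*(t*(1-t))) * ((1 + C (1-t) * X)^0 * (1 - C t * X)^(b+1))
      - C (((b:ℝ)+1)*t^2) * ((1 + C (1-t) * X)^1 * (1 - C t * X)^b)
      = derivative ((1 + C (1-t) * X)^0 * (1 - C t * X)^(b+1)) := by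
  have hd : derivative ((1 + C (1-t) * X)^0 * (1 - C t * X)^(b+1) : ℝ[X])
      = - C (((b:ℝ)+1)*t) * (1 - C t * X)^b := by
    simp [derivative_pow]
    ring
  rw [hd]
  apply Polynomial.funext
  intro x
  simp only [eval_mul, eval_pow, eval_C, eval_X, eval_add, eval_sub, eval_one, eval_neg, pow_zero, pow_one]
  ring

private lemma key_top (a : ℕ) (t : ℝ) :
    C (((a:ℝ)+1)*(1-t)^2) * ((1 + C (1-t) * X)^a * (1 - C t * X)^1)
      + C (((a:ℝ)+1)*(t*(1-t))) * ((1 + C (1-t) * X)^(a+1) * (1 - C t * X)^0)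
      = derivative ((1 + C (1-t) * X)^(a+1) * (1 - C t * X)^0) := by
  have hd : derivative ((1 + C (1-t) * X)^(a+1) * (1 - C t * X)^0 : ℝ[X])
      = C (((a:ℝ)+1)*(1-t)) * (1 + C (1-t) * X)^a := by
    simp [derivative_pow]
    ring
  rw [hd]
  apply Polynomial.funext
  intro x
  simp only [eval_mul, eval_pow, eval_C, eval_X, eval_add, eval_sub, eval_one, pow_zero, pow_one]
  ring


/-- `∇̃_n` raises the Krawtchouk index: `∇̃_n φ_r = (1/(nt))·φ_{r+1}`
(with `φ_{n+1} = 0`; at `k = 0` resp. `k = n` the coefficients of `φ_r(k-1)` resp.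
`φ_r(k+1)` vanish, so the boundary conventions are immaterial). -/
theorem stmt13 (n : ℕ) (hn : 1 ≤ n) (t : ℝ) (ht : t ∈ Set.Ioo (0 : ℝ) 1)
    (φ : ℕ → ℕ → ℝ)
    (hφ : ∀ k ≤ n, ∀ w : ℝ,
      ∑ r ∈ range (n + 1), (1 - t) ^ r / (Nat.factorial r : ℝ) * φ r k * w ^ r
        = (1 + (1 - t) * w) ^ k * (1 - t * w) ^ (n - k))
    (r : ℕ) (hr : r ≤ n) (k : ℕ) (hk : k ≤ n) :
    (k : ℝ) / n * ((1 - t) / t) * φ r (k - 1) - ((n : ℝ) - 2 * k) / n * φ r k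
        - ((n : ℝ) - k) / n * (t / (1 - t)) * φ r (k + 1)
      = 1 / ((n : ℝ) * t) * (if r = n then 0 else φ (r + 1) k) := by
  obtain ⟨ht0', ht1'⟩ := ht
  have ht0 : t ≠ 0 := ne_of_gt ht0'
  have ht1 : (1:ℝ) - t ≠ 0 := by linarith
  have hn0 : (n:ℝ) ≠ 0 := Nat.cast_ne_zero.2 (by omega)
  have hfac : ∀ m : ℕ, (Nat.factorial m : ℝ) ≠ 0 :=
    fun m => Nat.cast_ne_zero.2 (Nat.factorial_ne_zero m)
  -- the generating polynomial identity
  have hP : ∀ j, j ≤ n →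
      (∑ i ∈ range (n+1), C ((1-t)^i / (Nat.factorial i : ℝ) * φ i j) * X^i)
        = (1 + C (1-t) * X) ^ j * (1 - C t * X) ^ (n - j) := by
    intro j hj
    apply Polynomial.funext
    intro w
    have h := hφ j hj w
    simp only [eval_finset_sum, eval_mul, eval_pow, eval_C, eval_X, eval_add, eval_sub, eval_one]
    rw [← h]
  -- coefficient extraction
  have hc : ∀ j, j ≤ n → ∀ i, i ≤ n →
      (1-t)^i / (Nat.factorial i : ℝ) * φ i j
        = ((1 + C (1-t) * X) ^ j * (1 - C t * X) ^ (n - j) : ℝ[X]).coeff i := by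
    intro j hj i hi
    have h := congrArg (fun p => Polynomial.coeff p i) (hP j hj)
    simpa [finset_sum_coeff, mul_assoc, coeff_C_mul, coeff_X_pow, Finset.sum_ite_eq', Nat.lt_succ_iff, hi]
      using h
  -- solved form
  have hc' : ∀ j, j ≤ n → ∀ i, i ≤ n →
      φ i j = ((1 + C (1-t) * X) ^ j * (1 - C t * X) ^ (n - j) : ℝ[X]).coeff i
                * (Nat.factorial i : ℝ) / (1-t)^i := by
    intro j hj i hi
    have h := hc j hj i hi
    have hp : ((1:ℝ)-t)^i ≠ 0 := pow_ne_zero _ ht1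
    field_simp at h ⊢
    linarith [h]
  -- degree bound
  have hdeg : ((1 + C (1-t) * X) ^ k * (1 - C t * X) ^ (n - k) : ℝ[X]).natDegree ≤ n := by
    apply le_trans (natDegree_mul_le)
    have h1 : ((1 + C (1 - t) * X : ℝ[X])).natDegree ≤ 1 := by compute_degree
    have h2 : ((1 - C t * X : ℝ[X])).natDegree ≤ 1 := by compute_degree
    have g1 : ((1 + C (1 - t) * X : ℝ[X]) ^ k).natDegree ≤ k :=
      le_trans natDegree_pow_le (by nlinarith)
    have g2 : ((1 - C t * X : ℝ[X]) ^ (n-k)).natDegree ≤ n - k :=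
      le_trans natDegree_pow_le (by nlinarith)
    omega
  -- the RHS in coefficient form
  have e4 : (if r = n then 0 else φ (r+1) k)
      = ((1 + C (1-t) * X) ^ k * (1 - C t * X) ^ (n - k) : ℝ[X]).coeff (r+1)
          * ((r:ℝ)+1) * (Nat.factorial r : ℝ) / (1-t)^(r+1) := by
    rcases eq_or_ne r n with h | h
    · rw [if_pos h]
      have : ((1 + C (1-t) * X) ^ k * (1 - C t * X) ^ (n - k) : ℝ[X]).coeff (r+1) = 0 :=
        Polynomial.coeff_eq_zero_of_natDegree_lt (lt_of_le_of_lt hdeg (by omega))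
      rw [this]; ring
    · rw [if_neg h]
      rw [hc' k hk (r+1) (by omega), Nat.factorial_succ]
      push_cast
      ring
  rcases Nat.eq_zero_or_pos k with hk0 | hkpos
  · -- k = 0
    subst hk0
    obtain ⟨b, hb⟩ : ∃ b, n = b + 1 := ⟨n-1, by omega⟩
    subst hb
    have hK := congrArg (fun p => p.coeff r) (key_zero b t)
    simp only [neg_mul, coeff_sub, coeff_neg, coeff_C_mul, coeff_derivative] at hK
    simp only [Nat.sub_zero, Nat.add_sub_cancel] at *
    refine aux_alg (b+1) 0 r t _ _ _ _
      0
      (((1 + C (1-t) * X) ^ 0 * (1 - C t * X) ^ (b+1) : ℝ[X]).coeff r)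
      (((1 + C (1-t) * X) ^ 1 * (1 - C t * X) ^ b : ℝ[X]).coeff r)
      (((1 + C (1-t) * X) ^ 0 * (1 - C t * X) ^ (b+1) : ℝ[X]).coeff (r+1))
      ht0 ht1 hn0 (by push_cast; ring) ?_ ?_ ?_ ?_
    · exact hc' 0 (by omega) r hr
    · have h3 := hc' 1 (by omega) r hr
      rw [Nat.add_sub_cancel] at h3
      rw [h3]
    · exact e4
    · push_cast at hK ⊢
      linear_combination hK
  · rcases eq_or_lt_of_le hk with hkn | hklt
    · -- k = n
      subst hkn
      obtain ⟨a, ha⟩ : ∃ a, k = a + 1 := ⟨k-1, by omega⟩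
      subst ha
      have hK := congrArg (fun p => p.coeff r) (key_top a t)
      simp only [coeff_add, coeff_C_mul, coeff_derivative] at hK
      have hs1 : a + 1 - (a + 1) = 0 := by omega
      have hs2 : a + 1 - a = 1 := by omega
      rw [hs1] at e4
      refine aux_alg (a+1) (a+1) r t _ _ _ _
        (((1 + C (1-t) * X) ^ a * (1 - C t * X) ^ 1 : ℝ[X]).coeff r)
        (((1 + C (1-t) * X) ^ (a+1) * (1 - C t * X) ^ 0 : ℝ[X]).coeff r)
        0
        (((1 + C (1-t) * X) ^ (a+1) * (1 - C t * X) ^ 0 : ℝ[X]).coeff (r+1))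
        ht0 ht1 hn0 ?_ ?_ (by push_cast; ring) ?_ ?_
      · have h1 : φ r (a + 1 - 1) = φ r a := by norm_num
        rw [h1, hc' a (by omega) r hr, hs2]
      · have := hc' (a+1) le_rfl r hr
        rw [hs1] at this
        exact this
      · exact e4
      · push_cast at hK ⊢
        linear_combination hK
    · -- 0 < k < n
      obtain ⟨a, b, ha, hb⟩ : ∃ a b, k = a + 1 ∧ n = a + b + 2 :=
        ⟨k-1, n-k-1, by omega, by omega⟩
      subst ha hb
      have hK := congrArg (fun p => p.coeff r) (key_mid a b t)
      simp only [coeff_sub, coeff_C_mul, coeff_derivative] at hK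
      have hs1 : a + b + 2 - a = b + 2 := by omega
      have hs2 : a + b + 2 - (a+1) = b + 1 := by omega
      have hs3 : a + b + 2 - (a+1+1) = b := by omega
      rw [hs2] at e4
      refine aux_alg (a+b+2) (a+1) r t _ _ _ _
        (((1 + C (1-t) * X) ^ a * (1 - C t * X) ^ (b+2) : ℝ[X]).coeff r)
        (((1 + C (1-t) * X) ^ (a+1) * (1 - C t * X) ^ (b+1) : ℝ[X]).coeff r)
        (((1 + C (1-t) * X) ^ (a+1+1) * (1 - C t * X) ^ b : ℝ[X]).coeff r)
        (((1 + C (1-t) * X) ^ (a+1) * (1 - C t * X) ^ (b+1) : ℝ[X]).coeff (r+1))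
        ht0 ht1 hn0 ?_ ?_ ?_ ?_ ?_
      · have h1 : φ r (a + 1 - 1) = φ r a := by norm_num
        rw [h1, hc' a (by omega) r hr, hs1]
      · have := hc' (a+1) (by omega) r hr
        rw [hs2] at this
        exact this
      · have := hc' (a+1+1) (by omega) r hr
        rw [hs3] at this
        rw [this]
      · exact e4
      · push_cast at hK ⊢
        linear_combination hK
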